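/- Let β ∈ ℝ be such that its binary expansion has no run of c consecutive zeros and no run of c consecutive ones (c ≥ 2). If t ∈ {0,1}^{n+c+2} satisfies |t − β↾(n+c+2)| ≤ 3 as dyadic integers, then the first n bits of t equal β↾n. -/

import Mathlib

/-- The `i`-th bit (starting from `i = 0`) of the base-two expansion of the
fractional part of `α`, chosen with infinitely many zeros. -/
noncomputable def rbit (α : ℝ) (i : ℕ) : Bool :=
  decide (⌊Int.fract α * 2 ^ (i + 1)⌋ % 2 = 1)

/-- The first `n` bits of the base-two expansion of `α - ⌊α⌋`. -/
noncomputable def restr (α : ℝ) (n : ℕ) : List Bool :=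
  (List.range n).map (rbit α)

/-- The value of a binary string read as a (big-endian) dyadic integer. -/
def intVal (u : List Bool) : ℕ :=
  u.foldl (fun a b => 2 * a + cond b 1 0) 0

/-- `0.u`: the value of a binary string read as a dyadic fraction. -/
noncomputable def fracVal (u : List Bool) : ℝ :=
  (intVal u : ℝ) / 2 ^ u.length

lemma intVal_foldl_aux (u : List Bool) (a : ℕ) :
    u.foldl (fun a b => 2 * a + cond b 1 0) a = a * 2 ^ u.length + intVal u := by
  induction u generalizing a with
  | nil => simp [intVal]
  | cons b u ih =>
    have h2 : intVal (b :: u) = (cond b 1 0) * 2 ^ u.length + intVal u := by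
      show u.foldl _ (2 * 0 + cond b 1 0) = _
      rw [ih]; ring_nf
    simp only [List.foldl_cons, List.length_cons]
    rw [ih, h2, pow_succ]; ring

lemma intVal_cons (b : Bool) (u : List Bool) :
    intVal (b :: u) = (cond b 1 0) * 2 ^ u.length + intVal u := by
  show u.foldl _ (2 * 0 + cond b 1 0) = _
  rw [intVal_foldl_aux]; ring_nf

lemma intVal_append (u v : List Bool) :
    intVal (u ++ v) = intVal u * 2 ^ v.length + intVal v := by
  show (u ++ v).foldl _ 0 = _
  rw [List.foldl_append]
  exact intVal_foldl_aux v (intVal u)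

lemma intVal_lt (u : List Bool) : intVal u < 2 ^ u.length := by
  induction u with
  | nil => simp [intVal]
  | cons b u ih =>
    rw [intVal_cons, List.length_cons, pow_succ]
    cases b <;> simp <;> omega

lemma intVal_inj (u v : List Bool) (hl : u.length = v.length)
    (hv : intVal u = intVal v) : u = v := by
  induction u generalizing v with
  | nil => cases v with
    | nil => rfl
    | cons b v => simp at hl
  | cons b u ih =>
    cases v with
    | nil => simp at hl
    | cons b' v =>
      simp only [List.length_cons, Nat.add_right_cancel_iff] at hl
      rw [intVal_cons, intVal_cons, hl] at hv
      have hu := intVal_lt u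
      have hv' := intVal_lt v
      rw [hl] at hu
      have hb : b = b' ∧ intVal u = intVal v := by
        cases b <;> cases b' <;> simp_all <;> omega
      rw [hb.1, ih v hl hb.2]

lemma intVal_zero (u : List Bool) (h : intVal u = 0) : ∀ b ∈ u, b = false := by
  induction u with
  | nil => simp
  | cons b u ih =>
    rw [intVal_cons] at h
    have h2 : (2:ℕ)^u.length > 0 := Nat.pow_pos (by norm_num)
    cases b with
    | true => simp only [cond_true, one_mul] at h; omega
    | false =>
      simp only [cond_false, zero_mul, zero_add] at h
      intro x hx
      rcases List.mem_cons.1 hx with h' | h'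
      · exact h'
      · exact ih h x h'

lemma intVal_max (u : List Bool) (h : intVal u = 2 ^ u.length - 1) :
    ∀ b ∈ u, b = true := by
  induction u with
  | nil => simp
  | cons b u ih =>
    rw [intVal_cons, List.length_cons, pow_succ] at h
    have h2 : (1:ℕ) ≤ 2 ^ u.length := Nat.one_le_two_pow
    have hu := intVal_lt u
    cases b with
    | false => simp at h; omega
    | true =>
      simp only [cond_true, one_mul] at h
      intro x hx
      rcases List.mem_cons.1 hx with h' | h'
      · exact h'
      · exact ih (by omega) x h'

theorem run_free_stability (β : ℝ) (c n : ℕ) (hc : 2 ≤ c)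
    (hzero : ¬ ∃ m : ℕ, ∀ i < c, rbit β (m + i) = false)
    (hone : ¬ ∃ m : ℕ, ∀ i < c, rbit β (m + i) = true)
    (t : List Bool) (ht : t.length = n + c + 2)
    (hdiff : |(intVal t : ℤ) - (intVal (restr β (n + c + 2)) : ℤ)| ≤ 3) :
    t.take n = restr β n := by
  -- decompose the expansion
  set A := restr β n with hA
  set B := (List.range c).map (fun i => rbit β (n + i)) with hB
  set C := (List.range 2).map (fun i => rbit β (n + (c + i))) with hC
  have hsplit : restr β (n + c + 2) = A ++ (B ++ C) := by
    rw [hA, hB, hC]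
    unfold restr
    rw [show n + c + 2 = n + (c + 2) by ring, List.range_add, List.map_append,
      List.map_map, List.range_add, List.map_append, List.map_map]
    simp [Function.comp_def, add_assoc]
  have hlA : A.length = n := by simp [hA, restr]
  have hlB : B.length = c := by simp [hB]
  have hlC : C.length = 2 := by simp [hC]
  have hBC : (B ++ C).length = c + 2 := by simp [hlB, hlC]
  have hiBC : intVal (B ++ C) = intVal B * 4 + intVal C := by
    rw [intVal_append, hlC]; norm_num
  have hBlt := intVal_lt B
  have hClt := intVal_lt C
  rw [hlB] at hBlt
  rw [hlC] at hClt
  norm_num at hClt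
  -- lower bound on middle block
  have hlow : 4 ≤ intVal (B ++ C) := by
    by_contra h
    have hB0 : intVal B = 0 := by omega
    exact hzero ⟨n, fun i hi => intVal_zero B hB0 _
      (List.mem_map.2 ⟨i, List.mem_range.2 hi, rfl⟩)⟩
  -- upper bound
  have hhigh : intVal (B ++ C) ≤ 2 ^ (c + 2) - 4 := by
    by_contra h
    push_neg at h
    have hp : 2 ^ (c + 2) = 4 * 2 ^ c := by rw [pow_add]; ring
    have hBmax : intVal B = 2 ^ c - 1 := by omega
    refine hone ⟨n, fun i hi => intVal_max B (by rw [hlB]; exact hBmax) _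
      (List.mem_map.2 ⟨i, List.mem_range.2 hi, rfl⟩)⟩
  -- split t
  have htsplit : t = t.take n ++ t.drop n := (List.take_append_drop n t).symm
  have hlT : (t.take n).length = n := by
    rw [List.length_take, ht]; omega
  have hlD : (t.drop n).length = c + 2 := by
    rw [List.length_drop, ht]; omega
  have hiT : intVal t = intVal (t.take n) * 2 ^ (c + 2) + intVal (t.drop n) := by
    conv_lhs => rw [htsplit]
    rw [intVal_append, hlD]
  have hiS : intVal (restr β (n + c + 2)) = intVal A * 2 ^ (c + 2) + intVal (B ++ C) := by
    rw [hsplit, intVal_append, hBC]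
  have hDlt := intVal_lt (t.drop n)
  rw [hlD] at hDlt
  -- show the quotients coincide
  have hq : intVal (t.take n) = intVal A := by
    rw [abs_le] at hdiff
    have hK : (4:ℤ) ≤ 2 ^ (c + 2) := by
      have : (2:ℤ)^2 ≤ 2 ^ (c+2) := pow_le_pow_right₀ (by norm_num) (by omega)
      norm_num at this; exact this
    have e1 : ((intVal t : ℤ)) = (intVal (t.take n) : ℤ) * 2 ^ (c + 2) + (intVal (t.drop n) : ℤ) := by
      exact_mod_cast congrArg (Nat.cast : ℕ → ℤ) hiT
    have e2 : ((intVal (restr β (n + c + 2)) : ℤ)) = (intVal A : ℤ) * 2 ^ (c + 2) + (intVal (B ++ C) : ℤ) := by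
      exact_mod_cast congrArg (Nat.cast : ℕ → ℤ) hiS
    have b1 : (intVal (t.drop n) : ℤ) < 2 ^ (c + 2) := by exact_mod_cast hDlt
    have b1' : (0:ℤ) ≤ (intVal (t.drop n) : ℤ) := Int.natCast_nonneg _
    have b2 : (4:ℤ) ≤ (intVal (B ++ C) : ℤ) := by exact_mod_cast hlow
    have b3 : (intVal (B ++ C) : ℤ) ≤ 2 ^ (c + 2) - 4 := by
      have h4 : (4:ℕ) ≤ 2 ^ (c+2) := by exact_mod_cast hK
      have h5 := hhigh
      zify [h4] at h5
      exact_mod_cast h5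
    have key : ((intVal (t.take n) : ℤ) - (intVal A : ℤ)) * 2 ^ (c + 2)
        = (intVal (B ++ C) : ℤ) + ((intVal t : ℤ) - (intVal (restr β (n + c + 2)) : ℤ))
          - (intVal (t.drop n) : ℤ) := by
      rw [e1, e2]; ring
    have hne : (intVal (t.take n) : ℤ) = (intVal A : ℤ) := by
      rcases lt_trichotomy ((intVal (t.take n) : ℤ)) ((intVal A : ℤ)) with h | h | h
      · exfalso
        have h1 : (intVal (t.take n) : ℤ) - (intVal A : ℤ) ≤ -1 := by omega
        have h2 : ((intVal (t.take n) : ℤ) - (intVal A : ℤ)) * 2 ^ (c + 2)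
            ≤ (-1) * 2 ^ (c + 2) :=
          mul_le_mul_of_nonneg_right h1 (by positivity)
        linarith [hdiff.1, hdiff.2]
      · exact h
      · exfalso
        have h1 : (1:ℤ) ≤ (intVal (t.take n) : ℤ) - (intVal A : ℤ) := by omega
        have h2 : (1:ℤ) * 2 ^ (c + 2)
            ≤ ((intVal (t.take n) : ℤ) - (intVal A : ℤ)) * 2 ^ (c + 2) :=
          mul_le_mul_of_nonneg_right h1 (by positivity)
        linarith [hdiff.1, hdiff.2]
    exact_mod_cast hne
  have := intVal_inj (t.take n) A (by rw [hlT, hlA]) hq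
  rw [this, hA]
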